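/- arXiv:2006.00187 — 2 statements merged into one kernel-verified Lean document; each statement's English description precedes it below -/
import Mathlib

section
/- The plane-to-plane cost based on closest-point (CP) vectors is not invariant under rigid changes of the global coordinate system: there exist unit vectors n₁, n₂ ∈ EuclideanSpace ℝ (Fin 3), real numbers d₁, d₂, and a translation u ∈ EuclideanSpace ℝ (Fin 3) such that ‖d₁ • n₁ − d₂ • n₂‖ ≠ ‖(d₁ − ⟪n₁, u⟫) • n₁ − (d₂ − ⟪n₂, u⟫) • n₂‖, where translating the coordinate frame by u changes a plane (n, d) to (n, d − ⟪n, u⟫). -/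
theorem cp_cost_not_translation_invariant :
    ∃ (n₁ n₂ : EuclideanSpace ℝ (Fin 3)) (d₁ d₂ : ℝ)
      (u : EuclideanSpace ℝ (Fin 3)),
      ‖n₁‖ = 1 ∧ ‖n₂‖ = 1 ∧
      ‖d₁ • n₁ - d₂ • n₂‖ ≠
        ‖(d₁ - (inner ℝ n₁ u : ℝ)) • n₁ - (d₂ - (inner ℝ n₂ u : ℝ)) • n₂‖ := by
  refine ⟨EuclideanSpace.single 0 1, EuclideanSpace.single 1 1, 0, 0,
    EuclideanSpace.single 0 1, ?_, ?_, ?_⟩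
  · simp [EuclideanSpace.norm_single]
  · simp [EuclideanSpace.norm_single]
  · simp [EuclideanSpace.inner_single_left, EuclideanSpace.single_apply,
      EuclideanSpace.norm_single]
end

section
/- (Theorem 1) Let ι be a finite index type, m a natural number, and K : ι → ℕ. For each i : ι, let C i : Matrix (Fin (K i)) (Fin 13) ℝ, Q i : Matrix (Fin (K i)) (Fin 4) ℝ, M i : Matrix (Fin 4) (Fin 13) ℝ satisfy C i = Q i * M i and (Q i)ᵀ * (Q i) = 1, and let W i : Matrix (Fin 13) (Fin m) ℝ and ν i : Fin 13 → ℝ. Define A = ∑ i, ((C i) * (W i))ᵀ * ((C i) * (W i)), b = ∑ i, ((C i) * (W i))ᵀ *ᵥ ((C i) *ᵥ (ν i)), and Aʳ, bʳ analogously with M i in place of C i. Then for every λ : ℝ and every ξ : Fin m → ℝ, (A + λ • 1) *ᵥ ξ = −b if and only if (Aʳ + λ • 1) *ᵥ ξ = −bʳ; that is, the reduced Jacobian and reduced residual may replace the full Jacobian and residual in the Levenberg–Marquardt normal equations (JᵀJ + λI)ξ = −Jᵀδ without changing the solution set. -/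
open Matrix

theorem theorem1_reduced_LM_step
    (ι : Type*) [Fintype ι] (m : ℕ) (K : ι → ℕ)
    (C : ∀ i, Matrix (Fin (K i)) (Fin 13) ℝ)
    (Q : ∀ i, Matrix (Fin (K i)) (Fin 4) ℝ)
    (M : ∀ i, Matrix (Fin 4) (Fin 13) ℝ)
    (hC : ∀ i, C i = Q i * M i) (hQ : ∀ i, (Q i)ᵀ * (Q i) = 1)
    (W : ∀ i, Matrix (Fin 13) (Fin m) ℝ) (ν : ∀ i, Fin 13 → ℝ)
    (A : Matrix (Fin m) (Fin m) ℝ)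
    (hA : A = ∑ i, ((C i) * (W i))ᵀ * ((C i) * (W i)))
    (b : Fin m → ℝ)
    (hb : b = ∑ i, ((C i) * (W i))ᵀ *ᵥ ((C i) *ᵥ (ν i)))
    (Ar : Matrix (Fin m) (Fin m) ℝ)
    (hAr : Ar = ∑ i, ((M i) * (W i))ᵀ * ((M i) * (W i)))
    (br : Fin m → ℝ)
    (hbr : br = ∑ i, ((M i) * (W i))ᵀ *ᵥ ((M i) *ᵥ (ν i))) :
    ∀ (lam : ℝ) (ξ : Fin m → ℝ),
      (A + lam • 1) *ᵥ ξ = -b ↔ (Ar + lam • 1) *ᵥ ξ = -br := by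
  have hCt : ∀ i, (C i)ᵀ * (C i) = (M i)ᵀ * (M i) := by
    intro i
    rw [hC i, transpose_mul, Matrix.mul_assoc, ← Matrix.mul_assoc (Q i)ᵀ, hQ i,
      Matrix.one_mul]
  have hAeq : A = Ar := by
    rw [hA, hAr]
    refine Finset.sum_congr rfl fun i _ => ?_
    rw [transpose_mul, transpose_mul, Matrix.mul_assoc, Matrix.mul_assoc,
      ← Matrix.mul_assoc (C i)ᵀ, hCt i, Matrix.mul_assoc]
  have hbeq : b = br := by
    rw [hb, hbr]
    refine Finset.sum_congr rfl fun i _ => ?_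
    simp only [transpose_mul, mulVec_mulVec, Matrix.mul_assoc, hCt i]
  intro lam ξ
  rw [hAeq, hbeq]
end
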